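/- Let H be a Hamiltonian path of G from s to e, and let X be an SCC of G with e ∉ X. Then exactly one arc of H goes from a vertex of X to a vertex outside X. -/

import Mathlib

variable {V : Type*}

/-- Reachability in a directed graph given by arc relation `A`. -/
def Reach (A : V → V → Prop) : V → V → Prop := Relation.ReflTransGen A

/-- Two vertices are in the same strongly connected component. -/
def SameSCC (A : V → V → Prop) (u v : V) : Prop := Reach A u v ∧ Reach A v u

/-- The strongly connected component of a vertex. -/
def sccOf (A : V → V → Prop) (v : V) : Set V := {u | SameSCC A v u}

/-- A set is a strongly connected component. -/
def IsSCC (A : V → V → Prop) (X : Set V) : Prop := ∃ v, X = sccOf A v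

/-- Arcs of the reduced graph (condensation): between distinct SCCs joined by an arc of `A`. -/
def CondArc (A : V → V → Prop) (X Y : Set V) : Prop :=
  IsSCC A X ∧ IsSCC A Y ∧ X ≠ Y ∧ ∃ u ∈ X, ∃ v ∈ Y, A u v

/-- A directed graph is acyclic: no arc lies on a directed cycle. -/
def Acyclic (A : V → V → Prop) : Prop := ∀ u v, A u v → ¬ Reach A v u

/-- A Hamiltonian path of the digraph `A`, as a duplicate-free list visiting every vertex. -/
def IsHamList (A : V → V → Prop) (p : List V) : Prop :=
  p.Chain' A ∧ p.Nodup ∧ ∀ v, v ∈ p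

/-- A Hamiltonian path from `s` to `e`. -/
def IsHamPath (A : V → V → Prop) (s e : V) (p : List V) : Prop :=
  IsHamList A p ∧ p.head? = some s ∧ p.getLast? = some e

/-- A Hamiltonian path of the reduced graph: a duplicate-free list of SCCs, chained by
condensation arcs, containing every SCC. -/
def RHamPath (A : V → V → Prop) (P : List (Set V)) : Prop :=
  (∀ X ∈ P, IsSCC A X) ∧ P.Chain' (CondArc A) ∧ P.Nodup ∧ ∀ X, IsSCC A X → X ∈ P

/-- Along a chain, later elements are reachable from earlier ones. -/
lemma reach_of_chain' (A : V → V → Prop) {l : List V} (hc : l.Chain' A)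
    {i j : ℕ} (hij : i ≤ j) (hj : j < l.length) :
    Reach A (l[i]'(lt_of_le_of_lt hij hj)) (l[j]'hj) := by
  induction j, hij using Nat.le_induction with
  | base => exact Relation.ReflTransGen.refl
  | succ n hn ih =>
    have harc := List.isChain_iff_getElem.mp hc n (by omega)
    exact (ih (by omega)).tail harc

/-- A two-element infix corresponds to a pair of consecutive entries. -/
lemma pair_infix_iff {a b : V} {l : List V} :
    [a, b] <:+: l ↔ ∃ i, ∃ h : i + 1 < l.length, l[i]'(by omega) = a ∧ l[i+1]'h = b := by
  constructor
  · rintro ⟨t, u, rfl⟩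
    have h1 : (t ++ [a, b] ++ u)[t.length]'(by simp) = a := by
      simp [List.getElem_append]
    have h2 : (t ++ [a, b] ++ u)[t.length + 1]'(by simp) = b := by
      simp [List.getElem_append]
    exact ⟨t.length, by simp, h1, h2⟩
  · rintro ⟨i, h, rfl, rfl⟩
    refine ⟨l.take i, l.drop (i+2), ?_⟩
    conv_rhs => rw [← List.take_append_drop i l]
    rw [List.append_assoc]
    congr 1
    rw [List.drop_eq_getElem_cons (i := i) (by omega),
      List.drop_eq_getElem_cons (i := i+1) h]
    simp

/-- If `H` is a Hamiltonian path of `G` from `s` to `e` and `X` is an SCC with `e ∉ X`,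
then exactly one arc of `H` goes from a vertex of `X` to a vertex outside `X`. -/
theorem unique_outgoing_arc (A : V → V → Prop) (s e : V)
    (H : List V) (hH : IsHamPath A s e H)
    (X : Set V) (hX : IsSCC A X) (he : e ∉ X) :
    ∃! a : V × V, [a.1, a.2] <:+: H ∧ a.1 ∈ X ∧ a.2 ∉ X := by
  classical
  obtain ⟨⟨hchain, hnodup, hmem⟩, hhead, hlast⟩ := hH
  obtain ⟨v₀, rfl⟩ := hX
  have hne : H ≠ [] := by rintro rfl; simp at hlast
  have hlenpos : 0 < H.length := List.length_pos_iff.mpr hne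
  -- e is the last entry of H
  have helast : H[H.length - 1]'(by omega) = e := by
    have := List.getLast?_eq_getLast_of_ne_nil hne
    rw [this] at hlast
    rw [← List.getLast_eq_getElem hne]
    exact Option.some_injective _ hlast
  -- contiguity of the SCC in H
  have contig : ∀ (i k j : ℕ) (hik : i ≤ k) (hkj : k ≤ j) (hj : j < H.length),
      H[i]'(by omega) ∈ sccOf A v₀ → H[j]'hj ∈ sccOf A v₀ →
      H[k]'(by omega) ∈ sccOf A v₀ := by
    intro i k j hik hkj hj hi hjX
    exact ⟨hi.1.trans (reach_of_chain' A hchain hik (by omega)),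
      (reach_of_chain' A hchain hkj hj).trans hjX.2⟩
  -- the greatest index whose entry belongs to X
  set P : ℕ → Prop := fun i => ∃ h : i < H.length, H[i]'h ∈ sccOf A v₀ with hP
  set m := Nat.findGreatest P H.length with hm
  -- v₀ lies in X, at some index
  obtain ⟨i₀, hi₀, hi₀v⟩ := List.mem_iff_getElem.mp (hmem v₀)
  have hPi₀ : P i₀ := ⟨hi₀, by rw [hi₀v]; exact ⟨.refl, .refl⟩⟩
  obtain ⟨hmlt, hmX⟩ : P m := Nat.findGreatest_spec (le_of_lt hi₀) hPi₀
  have hmax : ∀ (k : ℕ) (hk : m < k) (hk' : k < H.length), H[k]'hk' ∉ sccOf A v₀ := by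
    intro k hk hk' hkX
    exact Nat.findGreatest_is_greatest hk (le_of_lt hk') ⟨hk', hkX⟩
  -- m is not the last index
  have hmne : m < H.length - 1 := by
    rcases lt_or_eq_of_le (Nat.le_pred_of_lt hmlt) with h | h
    · exact h
    · refine absurd ?_ he
      rw [← helast]
      have hq : H[m]'hmlt = H[H.length - 1]'(by omega) := by congr 1
      rw [← hq]
      exact hmX
  have hm1 : m + 1 < H.length := by omega
  have hm1X : H[m+1]'hm1 ∉ sccOf A v₀ := hmax (m+1) (by omega) hm1
  refine ⟨(H[m]'hmlt, H[m+1]'hm1), ⟨pair_infix_iff.mpr ⟨m, hm1, rfl, rfl⟩, hmX, hm1X⟩, ?_⟩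
  rintro ⟨a, b⟩ ⟨hinf, haX, hbX⟩
  obtain ⟨i, h, ha, hb⟩ := pair_infix_iff.mp hinf
  have him : i ≤ m := Nat.le_findGreatest (by omega) ⟨by omega, ha ▸ haX⟩
  have : i = m := by
    by_contra hne'
    exact hbX (hb ▸ contig i (i+1) m (by omega) (by omega) hmlt (ha ▸ haX) hmX)
  subst this
  simp only [Prod.mk.injEq]
  exact ⟨ha.symm, hb.symm⟩
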